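/- Let Q be a compact Hausdorff space. Every closed Riesz subspace of C(Q, ℝ) is the intersection of kernels of differences of Riesz homomorphisms; more precisely, if V is a norm-closed Riesz subspace of C(Q, ℝ), then V = {u : f(u) = g(u) for all pairs (f, g) of Riesz homomorphisms C(Q, ℝ) → ℝ that agree on V}. (Stone Theorem) -/

import Mathlib

open scoped Topology

/-- Localized Kakutani–Stone lemma: if a sublattice `L` interpolates `f`
at every pair of points, then `f` lies in the closure of `L`. -/
lemma mem_closure_of_pair_interp {X : Type*} [TopologicalSpace X] [CompactSpace X]
    (L : Set C(X, ℝ)) (nA : L.Nonempty)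
    (inf_mem : ∀ f ∈ L, ∀ g ∈ L, f ⊓ g ∈ L)
    (sup_mem : ∀ f ∈ L, ∀ g ∈ L, f ⊔ g ∈ L)
    (f : C(X, ℝ)) (sep : ∀ x y : X, ∃ g ∈ L, g x = f x ∧ g y = f y) :
    f ∈ closure L := by
  refine
    Filter.Frequently.mem_closure
      ((Filter.HasBasis.frequently_iff Metric.nhds_basis_ball).mpr fun ε pos => ?_)
  simp only [exists_prop, Metric.mem_ball]
  by_cases nX : Nonempty X
  swap
  · exact ⟨nA.some, (ContinuousMap.dist_lt_iff pos).mpr fun x => False.elim (nX ⟨x⟩), nA.choose_spec⟩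
  have sep' : ∀ x y : X, ∃ g : C(X, ℝ), g ∈ L ∧ g x = f x ∧ g y = f y := by
    intro x y; obtain ⟨g, hg, h1, h2⟩ := sep x y; exact ⟨g, hg, h1, h2⟩
  choose g hg w₁ w₂ using sep'
  let U : X → X → Set X := fun x y => {z | f z - ε < g x y z}
  have U_nhd_y : ∀ x y, U x y ∈ 𝓝 y := by
    intro x y
    refine IsOpen.mem_nhds ?_ ?_
    · apply isOpen_lt <;> continuity
    · rw [Set.mem_setOf_eq, w₂]
      exact sub_lt_self _ pos
  let ys : X → Finset X := fun x => (CompactSpace.elim_nhds_subcover (U x) (U_nhd_y x)).choose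
  let ys_w : ∀ x, ⋃ y ∈ ys x, U x y = ⊤ := fun x =>
    (CompactSpace.elim_nhds_subcover (U x) (U_nhd_y x)).choose_spec
  have ys_nonempty : ∀ x, (ys x).Nonempty := fun x =>
    Set.nonempty_of_union_eq_top_of_nonempty _ _ nX (ys_w x)
  let h : X → L := fun x =>
    ⟨(ys x).sup' (ys_nonempty x) fun y => (g x y : C(X, ℝ)),
      Finset.sup'_mem _ sup_mem _ _ _ fun y _ => hg x y⟩
  have lt_h : ∀ x z, f z - ε < (h x : X → ℝ) z := by
    intro x z
    obtain ⟨y, ym, zm⟩ := Set.exists_set_mem_of_union_eq_top _ _ (ys_w x) z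
    dsimp [h]
    simp only [Subtype.coe_mk, ContinuousMap.coe_sup', Finset.sup'_apply, Finset.lt_sup'_iff]
    exact ⟨y, ym, zm⟩
  have h_eq : ∀ x, (h x : X → ℝ) x = f x := by intro x; simp [h, w₁]
  let W : X → Set X := fun x => {z | (h x : X → ℝ) z < f z + ε}
  have W_nhd : ∀ x, W x ∈ 𝓝 x := by
    intro x
    refine IsOpen.mem_nhds ?_ ?_
    · apply isOpen_lt <;> fun_prop
    · dsimp only [W, Set.mem_setOf_eq]
      rw [Set.mem_setOf_eq, h_eq]
      exact lt_add_of_pos_right _ pos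
  let xs : Finset X := (CompactSpace.elim_nhds_subcover W W_nhd).choose
  let xs_w : ⋃ x ∈ xs, W x = ⊤ := (CompactSpace.elim_nhds_subcover W W_nhd).choose_spec
  have xs_nonempty : xs.Nonempty := Set.nonempty_of_union_eq_top_of_nonempty _ _ nX xs_w
  let k : (L : Type _) :=
    ⟨xs.inf' xs_nonempty fun x => (h x : C(X, ℝ)),
      Finset.inf'_mem _ inf_mem _ _ _ fun x _ => (h x).2⟩
  refine ⟨k.1, ?_, k.2⟩
  rw [ContinuousMap.dist_lt_iff pos]
  intro z
  rw [show ∀ a b ε : ℝ, dist a b < ε ↔ a < b + ε ∧ b - ε < a by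
        intros; simp only [← Metric.mem_ball, Real.ball_eq_Ioo, Set.mem_Ioo, and_comm]]
  fconstructor
  · dsimp [k]
    simp only [Finset.inf'_lt_iff, ContinuousMap.inf'_apply]
    exact Set.exists_set_mem_of_union_eq_top _ _ xs_w z
  · dsimp [k]
    simp only [Finset.lt_inf'_iff, ContinuousMap.inf'_apply]
    rintro x -
    apply lt_h

/-- Scaled evaluation as a linear map. -/
def evc {Q : Type*} [TopologicalSpace Q] (c : ℝ) (x : Q) : C(Q, ℝ) →ₗ[ℝ] ℝ where
  toFun u := c * u x
  map_add' u v := by simp [mul_add]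
  map_smul' r u := by simp; ring

lemma evc_riesz {Q : Type*} [TopologicalSpace Q] {c : ℝ} (hc : 0 ≤ c) (x : Q) :
    ∀ u v : C(Q, ℝ), evc c x (u ⊔ v) = evc c x u ⊔ evc c x v := by
  intro u v
  simp only [evc, LinearMap.coe_mk, AddHom.coe_mk, ContinuousMap.sup_apply]
  exact mul_max_of_nonneg _ _ hc

lemma zero_riesz {Q : Type*} [TopologicalSpace Q] :
    ∀ u v : C(Q, ℝ), (0 : C(Q, ℝ) →ₗ[ℝ] ℝ) (u ⊔ v) =
      (0 : C(Q, ℝ) →ₗ[ℝ] ℝ) u ⊔ (0 : C(Q, ℝ) →ₗ[ℝ] ℝ) v := by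
  intro u v; simp

/-- Stone Theorem: a norm-closed Riesz subspace of `C(Q, ℝ)` is the
intersection of the equality sets of all pairs of real Riesz homomorphisms
agreeing on it. -/
theorem stmt5 {Q : Type*} [TopologicalSpace Q] [CompactSpace Q] [T2Space Q]
    (V : Submodule ℝ C(Q, ℝ)) (hVc : IsClosed (V : Set C(Q, ℝ)))
    (hVlat : ∀ u ∈ V, ∀ v ∈ V, u ⊔ v ∈ V ∧ u ⊓ v ∈ V) :
    (V : Set C(Q, ℝ)) =
      {u : C(Q, ℝ) | ∀ f g : C(Q, ℝ) →ₗ[ℝ] ℝ,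
        (∀ x y : C(Q, ℝ), f (x ⊔ y) = f x ⊔ f y) →
        (∀ x y : C(Q, ℝ), g (x ⊔ y) = g x ⊔ g y) →
        (∀ v ∈ V, f v = g v) → f u = g u} := by
  ext u
  simp only [Set.mem_setOf_eq, SetLike.mem_coe]
  constructor
  · intro hu f g _ _ hfg
    exact hfg u hu
  · intro H
    -- key separation: for every pair of points there is an interpolating element of V
    have sep : ∀ x y : Q, ∃ v ∈ V, v x = u x ∧ v y = u y := by
      intro x y
      by_contra hno
      push_neg at hno
      -- hno : ∀ v ∈ V, v x = u x → v y ≠ u y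
      by_cases hB : ∃ w ∈ V, w x ≠ 0 ∨ w y ≠ 0
      · obtain ⟨w, hwV, hw⟩ := hB
        -- replace w by |w| ∈ V
        have hnegw : -w ∈ V := V.neg_mem hwV
        have hw'V : w ⊔ (-w) ∈ V := (hVlat w hwV (-w) hnegw).1
        set w' : C(Q, ℝ) := w ⊔ (-w) with hw'
        have hw'x : w' x = |w x| := by
          simp [hw', abs_eq_max_neg]
        have hw'y : w' y = |w y| := by
          simp [hw', abs_eq_max_neg]
        set a : ℝ := w' x with ha
        set b : ℝ := w' y with hb
        have ha0 : 0 ≤ a := hw'x ▸ abs_nonneg _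
        have hb0 : 0 ≤ b := hw'y ▸ abs_nonneg _
        have hab : 0 < a ∨ 0 < b := by
          rcases hw with h | h
          · left; rw [hw'x]; exact abs_pos.mpr h
          · right; rw [hw'y]; exact abs_pos.mpr h
        -- every v ∈ V satisfies a * v y = b * v x
        have hrel : ∀ v ∈ V, a * v y = b * v x := by
          intro v hvV
          by_contra hd
          set d : ℝ := a * v y - b * v x with hdd
          have hd0 : d ≠ 0 := sub_ne_zero.mpr hd
          set z : C(Q, ℝ) := ((u x * v y - u y * v x) / d) • w' + ((a * u y - b * u x) / d) • v
            with hz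
          have hzV : z ∈ V := V.add_mem (V.smul_mem _ hw'V) (V.smul_mem _ hvV)
          have hzx : z x = u x := by
            simp only [hz, ContinuousMap.add_apply, ContinuousMap.smul_apply, smul_eq_mul,
              ← ha]
            field_simp
            ring
          have hzy : z y = u y := by
            simp only [hz, ContinuousMap.add_apply, ContinuousMap.smul_apply, smul_eq_mul,
              ← hb]
            field_simp
            ring
          exact hno z hzV hzx hzy
        rcases hab with hA | hBpos
        · by_cases hbz : 0 < b
          · -- a > 0 and b > 0 : use scaled evaluations
            have hfr := evc_riesz (c := a⁻¹) (inv_nonneg.mpr hA.le) x (Q := Q)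
            have hgr := evc_riesz (c := b⁻¹) (inv_nonneg.mpr hbz.le) y (Q := Q)
            have hagree : ∀ v ∈ V, evc a⁻¹ x v = evc b⁻¹ y v := by
              intro v hv
              have := hrel v hv
              simp only [evc, LinearMap.coe_mk, AddHom.coe_mk]
              field_simp
              linarith [hrel v hv]
            have hu2 := H (evc a⁻¹ x) (evc b⁻¹ y) hfr hgr hagree
            simp only [evc, LinearMap.coe_mk, AddHom.coe_mk] at hu2
            -- so b * u x = a * u y ; then (u x / a) • w' interpolates u
            have hbu : b * u x = a * u y := by
              field_simp at hu2
              linarith [hu2]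
            refine hno ((u x / a) • w') (V.smul_mem _ hw'V) ?_ ?_
            · simp only [ContinuousMap.smul_apply, smul_eq_mul, ← ha]
              field_simp
            · simp only [ContinuousMap.smul_apply, smul_eq_mul, ← hb]
              field_simp
              linarith [hbu]
          · -- a > 0, b = 0 : every v ∈ V vanishes at y
            have hb00 : b = 0 := le_antisymm (not_lt.mp hbz) hb0
            have hvy : ∀ v ∈ V, v y = 0 := by
              intro v hv
              have := hrel v hv
              rw [hb00, zero_mul] at this
              exact (mul_eq_zero.mp this).resolve_left (ne_of_gt hA)
            by_cases huy : u y = 0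
            · refine hno ((u x / a) • w') (V.smul_mem _ hw'V) ?_ ?_
              · simp only [ContinuousMap.smul_apply, smul_eq_mul, ← ha]
                field_simp
              · rw [huy, ContinuousMap.smul_apply, hvy w' hw'V, smul_zero]
            · have hagree : ∀ v ∈ V, evc 1 y v = (0 : C(Q, ℝ) →ₗ[ℝ] ℝ) v := by
                intro v hv
                simp [evc, hvy v hv]
              have hu2 := H (evc 1 y) 0 (evc_riesz zero_le_one y) zero_riesz hagree
              simp only [evc, LinearMap.coe_mk, AddHom.coe_mk, one_mul,
                LinearMap.zero_apply] at hu2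
              exact huy hu2
        · by_cases haz : 0 < a
          · -- same as first case
            have hfr := evc_riesz (c := a⁻¹) (inv_nonneg.mpr haz.le) x (Q := Q)
            have hgr := evc_riesz (c := b⁻¹) (inv_nonneg.mpr hBpos.le) y (Q := Q)
            have hagree : ∀ v ∈ V, evc a⁻¹ x v = evc b⁻¹ y v := by
              intro v hv
              simp only [evc, LinearMap.coe_mk, AddHom.coe_mk]
              field_simp
              linarith [hrel v hv]
            have hu2 := H (evc a⁻¹ x) (evc b⁻¹ y) hfr hgr hagree
            simp only [evc, LinearMap.coe_mk, AddHom.coe_mk] at hu2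
            have hbu : b * u x = a * u y := by
              field_simp at hu2
              linarith [hu2]
            refine hno ((u x / a) • w') (V.smul_mem _ hw'V) ?_ ?_
            · simp only [ContinuousMap.smul_apply, smul_eq_mul, ← ha]
              field_simp
            · simp only [ContinuousMap.smul_apply, smul_eq_mul, ← hb]
              field_simp
              linarith [hbu]
          · -- a = 0, b > 0 : every v ∈ V vanishes at x
            have ha00 : a = 0 := le_antisymm (not_lt.mp haz) ha0
            have hvx : ∀ v ∈ V, v x = 0 := by
              intro v hv
              have := hrel v hv
              rw [ha00, zero_mul] at this
              exact (mul_eq_zero.mp this.symm).resolve_left (ne_of_gt hBpos)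
            by_cases hux : u x = 0
            · refine hno ((u y / b) • w') (V.smul_mem _ hw'V) ?_ ?_
              · rw [hux, ContinuousMap.smul_apply, hvx w' hw'V, smul_zero]
              · simp only [ContinuousMap.smul_apply, smul_eq_mul, ← hb]
                field_simp
            · have hagree : ∀ v ∈ V, evc 1 x v = (0 : C(Q, ℝ) →ₗ[ℝ] ℝ) v := by
                intro v hv
                simp [evc, hvx v hv]
              have hu2 := H (evc 1 x) 0 (evc_riesz zero_le_one x) zero_riesz hagree
              simp only [evc, LinearMap.coe_mk, AddHom.coe_mk, one_mul,
                LinearMap.zero_apply] at hu2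
              exact hux hu2
      · -- case A: all elements of V vanish at both x and y
        push_neg at hB
        by_cases hux : u x = 0
        · by_cases huy : u y = 0
          · exact hno 0 V.zero_mem (by simp [hux]) (by simp [huy])
          · have hagree : ∀ v ∈ V, evc 1 y v = (0 : C(Q, ℝ) →ₗ[ℝ] ℝ) v := by
              intro v hv
              simp [evc, (hB v hv).2]
            have hu2 := H (evc 1 y) 0 (evc_riesz zero_le_one y) zero_riesz hagree
            simp only [evc, LinearMap.coe_mk, AddHom.coe_mk, one_mul,
              LinearMap.zero_apply] at hu2
            exact huy hu2
        · have hagree : ∀ v ∈ V, evc 1 x v = (0 : C(Q, ℝ) →ₗ[ℝ] ℝ) v := by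
            intro v hv
            simp [evc, (hB v hv).1]
          have hu2 := H (evc 1 x) 0 (evc_riesz zero_le_one x) zero_riesz hagree
          simp only [evc, LinearMap.coe_mk, AddHom.coe_mk, one_mul,
            LinearMap.zero_apply] at hu2
          exact hux hu2
    -- now apply the localized Kakutani-Stone lemma
    have := mem_closure_of_pair_interp (V : Set C(Q, ℝ)) ⟨0, V.zero_mem⟩
      (fun f hf g hg => (hVlat f hf g hg).2) (fun f hf g hg => (hVlat f hf g hg).1) u
      (by intro x y; obtain ⟨v, hv, h1, h2⟩ := sep x y; exact ⟨v, hv, h1, h2⟩)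
    rwa [hVc.closure_eq] at this
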